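/- Suppose ν²+λ² ≠ 1 and let x_* := −2λν/(λ²+ν²−1). Then W̃(x_*) = (λν(λ−ν−1)(λ−ν+1)(λ+ν−1)(λ+ν+1)/(λ²+ν²−1)²)². In particular W̃(x_*) ≥ 0, with W̃(x_*) = 0 for admissible (ν,λ) (0<ν<1, 2√ν ≤ λ < 1+ν) if and only if λ+ν = 1. -/

import Mathlib

noncomputable def Wt (v l x : ℝ) : ℝ :=
  v*((x^2 - 1)^2*v*l^2 + x*(l^2 + 2*x*l - v^2 + 1)*(2*l*v + x*(l^2 + v^2 - 1)))

theorem stmt17 (v l : ℝ) (h : v^2 + l^2 ≠ 1) :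
    Wt v l (-2*l*v/(l^2 + v^2 - 1))
      = (l*v*(l - v - 1)*(l - v + 1)*(l + v - 1)*(l + v + 1)/(l^2 + v^2 - 1)^2)^2 ∧
    0 ≤ Wt v l (-2*l*v/(l^2 + v^2 - 1)) ∧
    (0 < v → v < 1 → 2*Real.sqrt v ≤ l → l < 1 + v →
      (Wt v l (-2*l*v/(l^2 + v^2 - 1)) = 0 ↔ l + v = 1)) := by
  have hd : l^2 + v^2 - 1 ≠ 0 := by
    intro h0; apply h; nlinarith [h0]
  have heq : Wt v l (-2*l*v/(l^2 + v^2 - 1))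
      = (l*v*(l - v - 1)*(l - v + 1)*(l + v - 1)*(l + v + 1)/(l^2 + v^2 - 1)^2)^2 := by
    unfold Wt
    field_simp
    ring
  refine ⟨heq, by rw [heq]; positivity, ?_⟩
  intro hv hv1 hl hl1
  have hl0 : 0 < l := lt_of_lt_of_le (by positivity) hl
  rw [heq]
  constructor
  · intro h0
    have h0' : l*v*(l - v - 1)*(l - v + 1)*(l + v - 1)*(l + v + 1) = 0 := by
      have := pow_eq_zero_iff (n := 2) (by norm_num) |>.mp h0
      field_simp at this
      rw [mul_zero] at this
      exact this
    have h1 : l - v - 1 < 0 := by linarith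
    have h2 : 0 < l - v + 1 := by linarith
    have h3 : 0 < l + v + 1 := by linarith
    have : l + v - 1 = 0 := by
      have hlv : l*v ≠ 0 := (mul_pos hl0 hv).ne'
      rcases mul_eq_zero.mp h0' with h' | h'
      · rcases mul_eq_zero.mp h' with h'' | h''
        · rcases mul_eq_zero.mp h'' with h3' | h3'
          · rcases mul_eq_zero.mp h3' with h4 | h4
            · exact absurd h4 hlv
            · nlinarith
          · nlinarith
        · exact h''
      · nlinarith
    linarith
  · intro h0
    have : l + v - 1 = 0 := by linarith
    rw [this]
    simp
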